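/- If g(x) = h(‖x‖_∞) is a p-dimensional probability density (h: ℝ₊ → ℝ₊ differentiable, vanishing at infinity) whose one-dimensional marginals are all standard normal, then g(x) = (2^{p-1}√(2π))⁻¹ ∫_{‖x‖_∞}^∞ y^{2-p} e^{-y²/2} dy for all x ≠ 0. -/

import Mathlib

open MeasureTheory Filter Set Metric

lemma norm_insertNth' {q : ℕ} (i : Fin (q+1)) (t : ℝ) (z : Fin q → ℝ) :
    ‖(i.insertNth t z : Fin (q+1) → ℝ)‖ = max |t| ‖z‖ := by
  apply le_antisymm
  · rw [pi_norm_le_iff_of_nonneg (le_max_of_le_left (abs_nonneg t))]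
    intro j
    rcases eq_or_ne j i with rfl | hj
    · simp [Real.norm_eq_abs]
    · obtain ⟨k, rfl⟩ := Fin.exists_succAbove_eq hj
      rw [Fin.insertNth_apply_succAbove]
      exact le_max_of_le_right (norm_le_pi_norm z k)
  · refine max_le ?_ ?_
    · have := norm_le_pi_norm (i.insertNth t z : Fin (q+1) → ℝ) i
      simpa [Real.norm_eq_abs] using this
    · rw [pi_norm_le_iff_of_nonneg (norm_nonneg _)]
      intro k
      have := norm_le_pi_norm (i.insertNth t z : Fin (q+1) → ℝ) (i.succAbove k)
      simpa using this

lemma radial_formula {q : ℕ} (hq : 0 < q) (f : ℝ → ℝ) :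
    (∫ z : Fin q → ℝ, f ‖z‖) = ((q : ℝ) * 2 ^ q) * ∫ y in Ioi (0:ℝ), y ^ (q - 1) * f y := by
  haveI : Nonempty (Fin q) := Fin.pos_iff_nonempty.1 hq
  have := MeasureTheory.integral_fun_norm_addHaar (volume : Measure (Fin q → ℝ)) f
  rw [Module.finrank_fin_fun] at this
  rw [this]
  have hball : (volume (ball (0 : Fin q → ℝ) 1)).toReal = 2 ^ q := by
    rw [volume_pi_ball _ (by norm_num : (0:ℝ) < 1)]
    simp [Real.volume_ball]
  rw [measureReal_def, hball, nsmul_eq_mul, smul_eq_mul]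
  simp only [smul_eq_mul]
  rw [mul_assoc]

lemma key_identity (q : ℕ) (h : ℝ → ℝ)
    (hcont : ContinuousOn h (Set.Ici 0))
    (hmarg : ∀ (i : Fin (q + 1)) (t : ℝ),
      (∫ z : Fin q → ℝ, h ‖(i.insertNth t z : Fin (q + 1) → ℝ)‖) =
        (Real.sqrt (2 * Real.pi))⁻¹ * Real.exp (-t ^ 2 / 2))
    {t : ℝ} (ht : 0 < t) :
    IntegrableOn (fun y => y ^ (q - 1) * h y) (Ioi t) ∧
      2 ^ q * t ^ q * h t + ((q:ℝ) * 2 ^ q) * (∫ y in Ioi t, y ^ (q - 1) * h y) =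
        (Real.sqrt (2 * Real.pi))⁻¹ * Real.exp (-t ^ 2 / 2) := by
  have hπ : 0 < Real.sqrt (2 * Real.pi) := Real.sqrt_pos.2 (by positivity)
  have hφpos : 0 < (Real.sqrt (2 * Real.pi))⁻¹ * Real.exp (-t ^ 2 / 2) := by positivity
  rcases Nat.eq_zero_or_pos q with rfl | hq
  · -- q = 0 : the marginal identity says h = φ on [0,∞)
    have hEq : ∀ s : ℝ, h |s| = (Real.sqrt (2 * Real.pi))⁻¹ * Real.exp (-s ^ 2 / 2) := by
      intro s
      have := hmarg 0 s
      have hvol : (volume : Measure (Fin 0 → ℝ)) = Measure.dirac 0 := by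
        rw [volume_pi, Measure.pi_of_empty (fun _ => volume) 0]
      rw [show (fun z : Fin 0 → ℝ => h ‖((0 : Fin 1).insertNth s z : Fin 1 → ℝ)‖)
          = fun _ : Fin 0 → ℝ => h |s| by
        funext z
        rw [norm_insertNth', show ‖z‖ = 0 by rw [Subsingleton.elim z 0, norm_zero],
          max_eq_left (abs_nonneg s)]] at this
      rwa [hvol, integral_dirac' _ _ stronglyMeasurable_const] at this
    constructor
    · have : IntegrableOn (fun y : ℝ =>
          (Real.sqrt (2 * Real.pi))⁻¹ * Real.exp (-y ^ 2 / 2)) (Ioi t) := by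
        have hg : Integrable (fun y : ℝ => Real.exp (-(1/2 : ℝ) * y ^ 2)) :=
          integrable_exp_neg_mul_sq (by norm_num)
        have : Integrable (fun y : ℝ =>
            (Real.sqrt (2 * Real.pi))⁻¹ * Real.exp (-y ^ 2 / 2)) := by
          simpa [neg_div, mul_comm, neg_mul, div_eq_mul_inv, mul_assoc]
            using hg.const_mul (Real.sqrt (2 * Real.pi))⁻¹
        exact this.integrableOn
      refine this.congr_fun (fun y hy => ?_) measurableSet_Ioi
      have : h |y| = _ := hEq y
      rw [abs_of_pos (ht.trans hy)] at this
      simp [this]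
    · have := hEq t
      rw [abs_of_pos ht] at this
      simpa using this
  · -- q ≥ 1
    have hmax : ∀ z : Fin q → ℝ, h ‖((0 : Fin (q+1)).insertNth t z : Fin (q+1) → ℝ)‖
        = h (max t ‖z‖) := by
      intro z; rw [norm_insertNth', abs_of_pos ht]
    have hrad : (Real.sqrt (2 * Real.pi))⁻¹ * Real.exp (-t ^ 2 / 2)
        = ((q : ℝ) * 2 ^ q) * ∫ y in Ioi (0:ℝ), y ^ (q - 1) * h (max t y) := by
      rw [← radial_formula hq (fun y => h (max t y)), ← hmarg 0 t]
      exact integral_congr_ae (Filter.Eventually.of_forall hmax)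
    -- integrability on (0, ∞)
    have hInt : IntegrableOn (fun y => y ^ (q - 1) * h (max t y)) (Ioi (0:ℝ)) := by
      by_contra hI
      rw [integral_undef hI, mul_zero] at hrad
      linarith
    have hIoiInt : IntegrableOn (fun y => y ^ (q - 1) * h y) (Ioi t) := by
      refine (hInt.mono_set (Ioi_subset_Ioi ht.le)).congr_fun (fun y hy => ?_) measurableSet_Ioi
      dsimp only
      rw [max_eq_right (le_of_lt (mem_Ioi.1 hy))]
    refine ⟨hIoiInt, ?_⟩
    have hsplit : (∫ y in Ioi (0:ℝ), y ^ (q - 1) * h (max t y))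
        = (∫ y in Ioc (0:ℝ) t, y ^ (q - 1) * h (max t y))
          + ∫ y in Ioi t, y ^ (q - 1) * h (max t y) := by
      rw [← setIntegral_union (Ioc_disjoint_Ioi le_rfl) measurableSet_Ioi
        (hInt.mono_set Ioc_subset_Ioi_self) (hInt.mono_set (Ioi_subset_Ioi ht.le)),
        Ioc_union_Ioi_eq_Ioi ht.le]
    have hIoc : (∫ y in Ioc (0:ℝ) t, y ^ (q - 1) * h (max t y)) = t ^ q / q * h t := by
      rw [setIntegral_congr_fun measurableSet_Ioc
        (g := fun y => y ^ (q - 1) * h t) (fun y hy => by rw [max_eq_left hy.2])]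
      rw [integral_mul_const, ← intervalIntegral.integral_of_le ht.le, integral_pow,
        Nat.sub_add_cancel hq, zero_pow hq.ne', Nat.cast_sub hq, Nat.cast_one]
      ring
    have hIoi2 : (∫ y in Ioi t, y ^ (q - 1) * h (max t y))
        = ∫ y in Ioi t, y ^ (q - 1) * h y := by
      refine setIntegral_congr_fun measurableSet_Ioi (fun y hy => ?_)
      rw [max_eq_right (le_of_lt (mem_Ioi.1 hy))]
    rw [hrad, hsplit, hIoc, hIoi2]
    have hq' : (q : ℝ) ≠ 0 := Nat.cast_ne_zero.2 hq.ne'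
    field_simp

lemma h_deriv (q : ℕ) (h : ℝ → ℝ)
    (hdiff : DifferentiableOn ℝ h (Set.Ici 0))
    (hmarg : ∀ (i : Fin (q + 1)) (t : ℝ),
      (∫ z : Fin q → ℝ, h ‖(i.insertNth t z : Fin (q + 1) → ℝ)‖) =
        (Real.sqrt (2 * Real.pi))⁻¹ * Real.exp (-t ^ 2 / 2))
    {t : ℝ} (ht : 0 < t) :
    HasDerivAt h (-(((2:ℝ) ^ q * Real.sqrt (2 * Real.pi))⁻¹ *
      (t ^ ((2:ℝ) - (q + 1 : ℝ)) * Real.exp (-t ^ 2 / 2)))) t := by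
  have hπ : 0 < Real.sqrt (2 * Real.pi) := Real.sqrt_pos.2 (by positivity)
  have hd : DifferentiableAt ℝ h t := hdiff.differentiableAt (Ici_mem_nhds ht)
  have hh : HasDerivAt h (deriv h t) t := hd.hasDerivAt
  set c : ℝ := (Real.sqrt (2 * Real.pi))⁻¹ with hc
  set g : ℝ → ℝ := fun y => y ^ (q - 1) * h y with hg
  set F : ℝ → ℝ := fun s => ∫ y in Ioi s, g y with hF
  set a : ℝ := t / 2 with ha
  have hapos : 0 < a := by positivity
  have hat : a < t := by rw [ha]; linarith
  have hga : IntegrableOn g (Ioi a) := (key_identity q h hdiff.continuousOn hmarg hapos).1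
  -- F s = (∫_{Ioi a} g) - ∫_a^s g  for s ≥ a
  have hsplit : ∀ s, a ≤ s → F s = (∫ y in Ioi a, g y) - ∫ y in a..s, g y := by
    intro s hs
    rw [intervalIntegral.integral_of_le hs]
    have : (∫ y in Ioi a, g y) = (∫ y in Ioc a s, g y) + ∫ y in Ioi s, g y := by
      rw [← setIntegral_union (Ioc_disjoint_Ioi le_rfl) measurableSet_Ioi
        (hga.mono_set Ioc_subset_Ioi_self) (hga.mono_set (Ioi_subset_Ioi hs)),
        Ioc_union_Ioi_eq_Ioi hs]
    rw [this]; ring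
  have hcontg : ContinuousOn g (Ioi a) := by
    apply ContinuousOn.mul (continuous_pow _).continuousOn
    exact hdiff.continuousOn.mono fun y hy => le_of_lt (hapos.trans hy)
  have hFt : HasDerivAt F (-(t ^ (q - 1) * h t)) t := by
    have hint : IntervalIntegrable g volume a t :=
      (intervalIntegrable_iff_integrableOn_Ioc_of_le hat.le).2
        (hga.mono_set Ioc_subset_Ioi_self)
    have hms : StronglyMeasurableAtFilter g (nhds t) :=
      ⟨Ioi a, Ioi_mem_nhds hat, hcontg.aestronglyMeasurable measurableSet_Ioi⟩
    have hcg : ContinuousAt g t :=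
      ((continuous_pow (q-1)).continuousAt).mul hd.continuousAt
    have h1 : HasDerivAt (fun s => ∫ y in a..s, g y) (g t) t :=
      intervalIntegral.integral_hasDerivAt_right hint hms hcg
    have h2 : HasDerivAt (fun s => (∫ y in Ioi a, g y) - ∫ y in a..s, g y) (-(g t)) t :=
      h1.const_sub _
    exact h2.congr_of_eventuallyEq
      (Filter.eventuallyEq_of_mem (Ioi_mem_nhds hat) fun s hs => hsplit s (le_of_lt hs))
  -- the "A" function and the gaussian
  have hA : HasDerivAt (fun s => 2 ^ q * s ^ q * h s + ((q:ℝ) * 2 ^ q) * F s)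
      (2 ^ q * ((q:ℝ) * t ^ (q - 1) * h t + t ^ q * deriv h t)
        + ((q:ℝ) * 2 ^ q) * -(t ^ (q - 1) * h t)) t := by
    have h3 : HasDerivAt (fun s : ℝ => s ^ q * h s)
        ((q:ℝ) * t ^ (q - 1) * h t + t ^ q * deriv h t) t := (hasDerivAt_pow q t).mul hh
    have h4 := (h3.const_mul ((2:ℝ) ^ q)).add (hFt.const_mul ((q:ℝ) * 2 ^ q))
    refine h4.congr_of_eventuallyEq (Filter.Eventually.of_forall fun s => ?_)
    simp only [Pi.add_apply]; ring
  have hφ : HasDerivAt (fun s : ℝ => c * Real.exp (-s ^ 2 / 2))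
      (c * (Real.exp (-t ^ 2 / 2) * (-(2 * t ^ 1) / 2))) t := by
    have h5 : HasDerivAt (fun s : ℝ => -s ^ 2 / 2) (-(2 * t ^ 1) / 2) t :=
      ((hasDerivAt_pow 2 t).neg).div_const 2
    exact (h5.exp).const_mul c
  have heq : (fun s => 2 ^ q * s ^ q * h s + ((q:ℝ) * 2 ^ q) * F s)
      =ᶠ[nhds t] (fun s : ℝ => c * Real.exp (-s ^ 2 / 2)) := by
    refine Filter.eventuallyEq_of_mem (Ioi_mem_nhds ht) fun s hs => ?_
    exact (key_identity q h hdiff.continuousOn hmarg hs).2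
  have huniq := (hA.congr_of_eventuallyEq heq.symm).unique hφ
  -- solve for deriv h t
  have htq : (0:ℝ) < t ^ q := pow_pos ht q
  have h2q : (0:ℝ) < (2:ℝ) ^ q := by positivity
  have hrp : t ^ ((2:ℝ) - (q + 1 : ℝ)) = t / t ^ q := by
    rw [show (2:ℝ) - ((q:ℝ) + 1) = 1 - (q:ℝ) by ring, Real.rpow_sub ht, Real.rpow_one,
      Real.rpow_natCast]
  have hdt : deriv h t = -(((2:ℝ) ^ q * Real.sqrt (2 * Real.pi))⁻¹ *
      (t ^ ((2:ℝ) - (q + 1 : ℝ)) * Real.exp (-t ^ 2 / 2))) := by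
    have hkey : 2 ^ q * t ^ q * deriv h t = -(c * (t * Real.exp (-t ^ 2 / 2))) := by
      nlinarith [huniq]
    rw [hrp, hc] at *
    field_simp at hkey ⊢
    linear_combination hkey
  rw [← hdt]; exact hh

/-- Hypercubically contoured densities with standard normal marginals are the Khintchine
mixture density. Stated in dimension `p = q + 1` (covering all integers `p ≥ 1`);
`‖x‖` on `Fin (q + 1) → ℝ` is the sup norm `max_i |x i|`. -/
theorem hypercubic_contour_uniqueness (q : ℕ) (h : ℝ → ℝ)
    (hnn : ∀ y ≥ (0 : ℝ), 0 ≤ h y)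
    (hdiff : DifferentiableOn ℝ h (Set.Ici 0))
    (hlim : Tendsto h atTop (nhds 0))
    (hdens : (∫ x : Fin (q + 1) → ℝ, h ‖x‖) = 1)
    (hmarg : ∀ (i : Fin (q + 1)) (t : ℝ),
      (∫ z : Fin q → ℝ, h ‖(i.insertNth t z : Fin (q + 1) → ℝ)‖) =
        (Real.sqrt (2 * Real.pi))⁻¹ * Real.exp (-t ^ 2 / 2)) :
    ∀ x : Fin (q + 1) → ℝ, x ≠ 0 →
      h ‖x‖ = ((2 : ℝ) ^ ((q + 1 : ℝ) - 1) * Real.sqrt (2 * Real.pi))⁻¹ *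
        ∫ y in Set.Ioi ‖x‖, y ^ ((2 : ℝ) - (q + 1 : ℝ)) * Real.exp (-y ^ 2 / 2) := by
  intro x hx
  set r := ‖x‖ with hrdef
  have hr : 0 < r := norm_pos_iff.2 hx
  set C : ℝ := ((2:ℝ) ^ q * Real.sqrt (2 * Real.pi))⁻¹ with hC
  set d : ℝ → ℝ := fun y =>
    -(C * (y ^ ((2:ℝ) - (q + 1 : ℝ)) * Real.exp (-y ^ 2 / 2))) with hd
  have hder : ∀ y ∈ Ici r, HasDerivAt h (d y) y :=
    fun y hy => h_deriv q h hdiff hmarg (lt_of_lt_of_le hr hy)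
  have hneg : ∀ y ∈ Ioi r, d y ≤ 0 := by
    intro y hy
    have hy0 : (0:ℝ) ≤ y := (hr.trans hy).le
    have : 0 ≤ C * (y ^ ((2:ℝ) - (q + 1 : ℝ)) * Real.exp (-y ^ 2 / 2)) := by
      have h1 : (0:ℝ) ≤ C := by
        rw [hC]
        positivity
      exact mul_nonneg h1 (mul_nonneg (Real.rpow_nonneg hy0 _) (Real.exp_pos _).le)
    simpa [hd] using this
  have hint := integral_Ioi_of_hasDerivAt_of_nonpos' hder hneg hlim
  have h2 : h r = -∫ y in Ioi r, d y := by rw [hint]; ring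
  have h3 : (-∫ y in Ioi r, d y)
      = C * ∫ y in Ioi r, y ^ ((2:ℝ) - (q + 1 : ℝ)) * Real.exp (-y ^ 2 / 2) := by
    rw [← integral_neg]
    simp only [hd, neg_neg]
    exact integral_const_mul C _
  have h4 : ((2 : ℝ) ^ ((q + 1 : ℝ) - 1) * Real.sqrt (2 * Real.pi))⁻¹ = C := by
    rw [hC, show ((q:ℝ) + 1) - 1 = (q:ℝ) by ring, Real.rpow_natCast]
  rw [h2, h3, h4]
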